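/- arXiv:cs/0601107 — 2 statements merged into one kernel-verified Lean document; each statement's English description precedes it below -/
import Mathlib

section
/- For positive definite M×M complex matrices A, B and λ ∈ (0,1), equality det(λA + (1−λ)B) = det(A)^λ det(B)^{1−λ} holds if and only if A = B. -/
open Matrix ComplexOrder

section Aux

open Finset in
private lemma stmt8_scalar_le {l d : ℝ} (hl0 : 0 < l) (hl1 : l < 1) (hd : 0 < d) :
    d ^ (1 - l) ≤ l + (1 - l) * d := by
  have h := Real.geom_mean_le_arith_mean2_weighted hl0.le (by linarith : (0:ℝ) ≤ 1 - l)
    zero_le_one hd.le (by ring)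
  simpa using h

private lemma stmt8_scalar_lt {l d : ℝ} (hl0 : 0 < l) (hl1 : l < 1) (hd : 0 < d)
    (hne : d ≠ 1) : d ^ (1 - l) < l + (1 - l) * d := by
  have hpos : 0 < l + (1 - l) * d := by nlinarith
  have h := strictConcaveOn_log_Ioi.2 (Set.mem_Ioi.mpr zero_lt_one) (Set.mem_Ioi.mpr hd)
    (Ne.symm hne) hl0 (by linarith : (0:ℝ) < 1 - l) (by ring)
  simp only [smul_eq_mul, mul_one, Real.log_one, mul_zero, zero_add] at h
  have h2 : Real.log (d ^ (1 - l)) < Real.log (l + (1 - l) * d) := by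
    rwa [Real.log_rpow hd]
  have := Real.exp_lt_exp.mpr h2
  rwa [Real.exp_log (Real.rpow_pos_of_pos hd _), Real.exp_log hpos] at this

private lemma stmt8_posdef_conj {n : ℕ} {B C : Matrix (Fin n) (Fin n) ℂ}
    (hB : B.PosDef) (hC : IsUnit C.det) : (Cᴴ * B * C).PosDef := by
  refine Matrix.PosDef.of_dotProduct_mulVec_pos (Matrix.isHermitian_conjTranspose_mul_mul C hB.1) fun x hx => ?_
  have hCx : C *ᵥ x ≠ 0 := by
    intro h
    apply hx
    have := congrArg (fun v => C⁻¹ *ᵥ v) h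
    simpa [Matrix.mulVec_mulVec, Matrix.nonsing_inv_mul C hC] using this
  have := hB.dotProduct_mulVec_pos hCx
  simpa only [star_mulVec, Matrix.dotProduct_mulVec, Matrix.vecMul_vecMul] using this

section SqrtAux
open scoped MatrixOrder

private noncomputable def stmt8_sqrt {n : ℕ} (A : Matrix (Fin n) (Fin n) ℂ) :
    Matrix (Fin n) (Fin n) ℂ := CFC.sqrt A

private lemma stmt8_sqrt_posSemidef {n : ℕ} (A : Matrix (Fin n) (Fin n) ℂ) :
    (stmt8_sqrt A).PosSemidef := (CFC.sqrt_nonneg A).posSemidef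

private lemma stmt8_sqrt_mul_self {n : ℕ} {A : Matrix (Fin n) (Fin n) ℂ} (hA : A.PosSemidef) :
    stmt8_sqrt A * stmt8_sqrt A = A := CFC.sqrt_mul_sqrt_self A hA.nonneg

end SqrtAux

/-- For posdef D, equality `det(l•1 + (1-l)•D).re = (det D).re ^ (1-l)` implies `D = 1`. -/
private lemma stmt8_key {n : ℕ} {D : Matrix (Fin n) (Fin n) ℂ} (hD : D.PosDef)
    {l : ℝ} (hl0 : 0 < l) (hl1 : l < 1)
    (heq : ((l : ℂ) • (1 : Matrix (Fin n) (Fin n) ℂ) + ((1 - l : ℝ) : ℂ) • D).det.re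
      = D.det.re ^ (1 - l)) : D = 1 := by
  set μ := hD.1.eigenvalues with hμ
  have hμpos : ∀ i, 0 < μ i := hD.eigenvalues_pos
  set U : Matrix (Fin n) (Fin n) ℂ := (hD.1.eigenvectorUnitary : Matrix (Fin n) (Fin n) ℂ) with hU
  have hspec : D = U * diagonal (RCLike.ofReal ∘ μ) * star U := hD.1.spectral_theorem
  have hUU : U * star U = 1 := Matrix.mem_unitaryGroup_iff.mp hD.1.eigenvectorUnitary.2
  -- rewrite the convex combination as a conjugated diagonal
  have hsmul : ∀ (c : ℂ) (X : Matrix (Fin n) (Fin n) ℂ),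
      c • (U * X * star U) = U * (c • X) * star U := by
    intro c X
    rw [Matrix.mul_smul, Matrix.smul_mul]
  have hcomb : (l : ℂ) • (1 : Matrix (Fin n) (Fin n) ℂ) + ((1 - l : ℝ) : ℂ) • D
      = U * diagonal (fun i => (l : ℂ) + ((1 - l : ℝ) : ℂ) * (μ i : ℂ)) * star U := by
    have h1 : (1 : Matrix (Fin n) (Fin n) ℂ) = U * 1 * star U := by
      rw [mul_one, hUU]
    conv_lhs => rw [hspec, h1]
    rw [hsmul, hsmul, ← Matrix.add_mul, ← Matrix.mul_add]
    congr 2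
    ext i j
    rcases eq_or_ne i j with h | h
    · subst h
      simp [Matrix.diagonal_apply_eq, Matrix.one_apply_eq]
    · simp [Matrix.diagonal_apply_ne _ h, Matrix.one_apply_ne h]
  have hdetU : U.det * (star U).det = 1 := by
    rw [← Matrix.det_mul, hUU, Matrix.det_one]
  have hdetconj : ∀ X : Matrix (Fin n) (Fin n) ℂ, (U * X * star U).det = X.det := by
    intro X
    rw [Matrix.det_mul, Matrix.det_mul]
    rw [mul_comm U.det X.det, mul_assoc, hdetU, mul_one]
  -- compute both determinants as real products
  have hdet1 : ((l : ℂ) • (1 : Matrix (Fin n) (Fin n) ℂ) + ((1 - l : ℝ) : ℂ) • D).det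
      = ((∏ i, (l + (1 - l) * μ i) : ℝ) : ℂ) := by
    rw [hcomb, hdetconj, Matrix.det_diagonal]
    push_cast
    rfl
  have hdet2 : D.det = ((∏ i, μ i : ℝ) : ℂ) := by
    rw [hD.1.det_eq_prod_eigenvalues]
    push_cast
    rfl
  rw [hdet1, hdet2, Complex.ofReal_re, Complex.ofReal_re] at heq
  -- equality of products forces each eigenvalue to be 1
  have hprod : ∏ i, (μ i) ^ (1 - l) = ∏ i, (l + (1 - l) * μ i) := by
    rw [Real.finset_prod_rpow _ _ (fun i _ => (hμpos i).le), heq]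
  have hall : ∀ i, μ i = 1 := by
    intro i
    by_contra hne
    have hlt : ∏ j, (μ j) ^ (1 - l) < ∏ j, (l + (1 - l) * μ j) :=
      Finset.prod_lt_prod (fun j _ => Real.rpow_pos_of_pos (hμpos j) _)
        (fun j _ => stmt8_scalar_le hl0 hl1 (hμpos j))
        ⟨i, Finset.mem_univ i, stmt8_scalar_lt hl0 hl1 (hμpos i) hne⟩
    exact absurd hprod (ne_of_lt hlt)
  have : diagonal (RCLike.ofReal ∘ μ) = (1 : Matrix (Fin n) (Fin n) ℂ) := by
    ext i j
    rcases eq_or_ne i j with h | h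
    · subst h
      simp [hall i]
    · simp [Matrix.diagonal_apply_ne _ h, Matrix.one_apply_ne h]
  rw [hspec, this, mul_one, hUU]

end Aux

/-- Equality case of log-concavity of the determinant on positive definite complex
matrices: `det(λA + (1−λ)B) = det(A)^λ det(B)^{1−λ}` iff `A = B`. -/
theorem stmt8 (M : ℕ) (A B : Matrix (Fin M) (Fin M) ℂ)
    (hA : A.PosDef) (hB : B.PosDef) (l : ℝ) (hl0 : 0 < l) (hl1 : l < 1) :
    ((l : ℂ) • A + ((1 - l : ℝ) : ℂ) • B).det.re
      = A.det.re ^ l * B.det.re ^ (1 - l) ↔ A = B := by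
  have haR : (0 : ℝ) < A.det.re := (Complex.lt_def.mp hA.det_pos).1
  have haC : A.det = (A.det.re : ℂ) := by
    have him := (Complex.lt_def.mp hA.det_pos).2
    exact (Complex.ext_iff.mpr ⟨rfl, him.symm⟩)
  constructor
  · intro heq
    -- set up the square root of A
    set S : Matrix (Fin M) (Fin M) ℂ := stmt8_sqrt A with hS
    have hSps : S.PosSemidef := stmt8_sqrt_posSemidef A
    have hSS : S * S = A := stmt8_sqrt_mul_self hA.posSemidef
    have hSH : Sᴴ = S := hSps.1
    have hdetS : S.det * S.det = A.det := by rw [← Matrix.det_mul, hSS]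
    have hdetSne : S.det ≠ 0 := by
      intro h
      rw [h, mul_zero] at hdetS
      exact hA.det_pos.ne' hdetS.symm
    have hSunit : IsUnit S.det := Ne.isUnit hdetSne
    have hSinvH : (S⁻¹)ᴴ = S⁻¹ := by rw [Matrix.conjTranspose_nonsing_inv, hSH]
    set D : Matrix (Fin M) (Fin M) ℂ := S⁻¹ * B * S⁻¹ with hD
    have hDpos : D.PosDef := by
      have h := stmt8_posdef_conj hB (Matrix.isUnit_nonsing_inv_det S hSunit)
      rwa [hSinvH] at h
    have hBD : B = S * D * S := by
      rw [hD, ← mul_assoc, ← mul_assoc, Matrix.mul_nonsing_inv _ hSunit, one_mul,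
        mul_assoc, Matrix.nonsing_inv_mul _ hSunit, mul_one]
    have hcomb : (l : ℂ) • A + ((1 - l : ℝ) : ℂ) • B
        = S * ((l : ℂ) • (1 : Matrix (Fin M) (Fin M) ℂ) + ((1 - l : ℝ) : ℂ) • D) * S := by
      rw [mul_add, add_mul, Matrix.mul_smul, Matrix.smul_mul, mul_one, hSS,
        Matrix.mul_smul, Matrix.smul_mul, ← hBD]
    -- determinant computations
    set X : Matrix (Fin M) (Fin M) ℂ :=
      (l : ℂ) • (1 : Matrix (Fin M) (Fin M) ℂ) + ((1 - l : ℝ) : ℂ) • D with hX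
    have hdet1 : ((l : ℂ) • A + ((1 - l : ℝ) : ℂ) • B).det = A.det * X.det := by
      rw [hcomb, Matrix.det_mul, Matrix.det_mul, ← hdetS]
      ring
    have hdetB : B.det = A.det * D.det := by
      rw [hBD, Matrix.det_mul, Matrix.det_mul, ← hdetS]
      ring
    have hre1 : ((l : ℂ) • A + ((1 - l : ℝ) : ℂ) • B).det.re = A.det.re * X.det.re := by
      rw [hdet1, haC, Complex.re_ofReal_mul]
      simp
    have hreB : B.det.re = A.det.re * D.det.re := by
      rw [hdetB, haC, Complex.re_ofReal_mul]
      simp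
    have hdR : (0 : ℝ) < D.det.re := (Complex.lt_def.mp hDpos.det_pos).1
    rw [hre1, hreB] at heq
    have hrhs : A.det.re ^ l * (A.det.re * D.det.re) ^ (1 - l)
        = A.det.re * D.det.re ^ (1 - l) := by
      rw [Real.mul_rpow haR.le hdR.le, ← mul_assoc, ← Real.rpow_add haR]
      norm_num
    rw [hrhs] at heq
    have hXD : X.det.re = D.det.re ^ (1 - l) := mul_left_cancel₀ haR.ne' heq
    have hD1 : D = 1 := stmt8_key hDpos hl0 hl1 hXD
    rw [hBD, hD1, mul_one, hSS]
  · rintro rfl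
    have : (l : ℂ) • A + ((1 - l : ℝ) : ℂ) • A = A := by
      rw [← add_smul]
      push_cast
      norm_num
    rw [this, ← Real.rpow_add haR]
    norm_num
end

section
/- Let H be an M×N complex matrix and Q⁽¹⁾, Q⁽²⁾ be N×N positive semidefinite matrices with σ² > 0. If det(1_M + H((Q⁽¹⁾+Q⁽²⁾)/2)Hᴴ/σ²) = det(1_M + HQ⁽¹⁾Hᴴ/σ²)^{1/2} · det(1_M + HQ⁽²⁾Hᴴ/σ²)^{1/2}, then HQ⁽¹⁾Hᴴ = HQ⁽²⁾Hᴴ. -/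
open Matrix ComplexOrder

/-- A real-nonnegative scalar multiple of a PSD complex matrix is PSD. -/
lemma aux_smul_posSemidef {n : Type*} [Fintype n] {A : Matrix n n ℂ}
    (hA : A.PosSemidef) {c : ℝ} (hc : 0 ≤ c) : ((c : ℂ) • A).PosSemidef := by
  refine .of_dotProduct_mulVec_nonneg ?_ fun x => ?_
  · have h1 : ((c : ℂ) • A)ᴴ = star (c : ℂ) • Aᴴ := Matrix.conjTranspose_smul _ _
    rw [Matrix.IsHermitian, h1, Complex.star_def, Complex.conj_ofReal, hA.1.eq]
  · rw [Matrix.smul_mulVec, dotProduct_smul, smul_eq_mul]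
    exact mul_nonneg (Complex.zero_le_real.mpr hc) (hA.dotProduct_mulVec_nonneg x)

/-- Conjugation of a positive definite matrix by an invertible matrix. -/
lemma aux_posDef_conj {n : Type*} [Fintype n] [DecidableEq n] {B P : Matrix n n ℂ}
    (hB : B.PosDef) (hP : IsUnit P.det) : (Pᴴ * B * P).PosDef := by
  refine .of_dotProduct_mulVec_pos (Matrix.isHermitian_conjTranspose_mul_mul P hB.1) fun x hx => ?_
  have hPx : P *ᵥ x ≠ 0 := by
    intro h
    apply hx
    have h2 := congrArg (fun v => P⁻¹ *ᵥ v) h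
    simpa [Matrix.mulVec_mulVec, Matrix.nonsing_inv_mul P hP] using h2
  simpa only [star_mulVec, dotProduct_mulVec, vecMul_vecMul] using hB.dotProduct_mulVec_pos hPx

/-- AM–GM for a single positive real: `√t ≤ (1+t)/2`. -/
lemma aux_sqrt_le {t : ℝ} (ht : 0 < t) : Real.sqrt t ≤ (1 + t) / 2 := by
  nlinarith [Real.sq_sqrt ht.le, Real.sqrt_nonneg t, sq_nonneg (Real.sqrt t - 1)]

lemma aux_sqrt_lt {t : ℝ} (ht : 0 < t) (ht1 : t ≠ 1) : Real.sqrt t < (1 + t) / 2 := by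
  have h1 : Real.sqrt t ≠ 1 := by
    intro h
    apply ht1
    have h2 := Real.sq_sqrt ht.le
    rw [h] at h2
    simpa using h2.symm
  have h3 : (0:ℝ) < (Real.sqrt t - 1) ^ 2 :=
    lt_of_le_of_ne (sq_nonneg _) (Ne.symm (pow_ne_zero 2 (sub_ne_zero.mpr h1)))
  nlinarith [Real.sq_sqrt ht.le, Real.sqrt_nonneg t]

open scoped MatrixOrder in
/-- Equality in log-concavity of the determinant forces equality of PD matrices. -/
lemma aux_key {n : ℕ} {A B : Matrix (Fin n) (Fin n) ℂ} (hA : A.PosDef) (hB : B.PosDef)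
    (h : (((1 : ℂ) / 2) • (A + B)).det.re
      = A.det.re ^ ((1 : ℝ) / 2) * B.det.re ^ ((1 : ℝ) / 2)) : A = B := by
  classical
  set S := CFC.sqrt A with hSdef
  have hSps : S.PosSemidef := (CFC.sqrt_nonneg A).posSemidef
  have hSS : S * S = A := CFC.sqrt_mul_sqrt_self A hA.posSemidef.nonneg
  have hdetA : (0 : ℂ) < A.det := hA.det_pos
  have hdetS_ne : S.det ≠ 0 := by
    intro h0
    rw [← hSS, Matrix.det_mul, h0, zero_mul] at hdetA
    exact lt_irrefl _ hdetA
  have hSunit : IsUnit S.det := isUnit_iff_ne_zero.mpr hdetS_ne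
  have hSiS : S⁻¹ * S = 1 := Matrix.nonsing_inv_mul S hSunit
  have hSSi : S * S⁻¹ = 1 := Matrix.mul_nonsing_inv S hSunit
  have hSinvH : (S⁻¹).IsHermitian := hSps.1.inv
  set C := S⁻¹ * B * S⁻¹ with hCdef
  have hSinv_unit : IsUnit (S⁻¹).det := by
    have h1 : (S⁻¹).det * S.det = 1 := by rw [← Matrix.det_mul, hSiS, Matrix.det_one]
    exact IsUnit.of_mul_eq_one _ h1
  have hC : C.PosDef := by
    have h1 := aux_posDef_conj hB hSinv_unit
    rwa [hSinvH.eq] at h1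
  have hBC : S * C * S = B := by
    rw [hCdef]
    simp only [Matrix.mul_assoc]
    rw [hSiS, Matrix.mul_one, ← Matrix.mul_assoc, hSSi, Matrix.one_mul]
  have hABd : A + B = S * (1 + C) * S := by
    rw [mul_add, add_mul, mul_one, hSS, hBC]
  -- eigenvalues of C
  have hCH : C.IsHermitian := hC.1
  set lam := hCH.eigenvalues with hlamdef
  have hlampos : ∀ i, 0 < lam i := hC.eigenvalues_pos
  set U := (hCH.eigenvectorUnitary : Matrix (Fin n) (Fin n) ℂ) with hUdef
  have hUU : U * star U = 1 := Matrix.mem_unitaryGroup_iff.mp hCH.eigenvectorUnitary.2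
  have hspec : C = U * Matrix.diagonal (RCLike.ofReal ∘ lam) * star U := hCH.spectral_theorem
  have hUd : U.det * (star U).det = 1 := by rw [← Matrix.det_mul, hUU, Matrix.det_one]
  have hdet1C : ((1 : Matrix (Fin n) (Fin n) ℂ) + C).det = ∏ i, (1 + (lam i : ℂ)) := by
    have h1 : (1 : Matrix (Fin n) (Fin n) ℂ) + C
        = U * (1 + Matrix.diagonal (RCLike.ofReal ∘ lam)) * star U := by
      rw [mul_add, add_mul, mul_one, hUU, ← hspec]
    rw [h1, Matrix.det_mul, Matrix.det_mul]
    rw [mul_comm U.det, mul_assoc, hUd, mul_one]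
    rw [← Matrix.diagonal_one, Matrix.diagonal_add, Matrix.det_diagonal]
    rfl
  have hdetC : C.det = ∏ i, (lam i : ℂ) := hCH.det_eq_prod_eigenvalues
  -- det S as a real number
  set mu := hSps.1.eigenvalues with hmudef
  set sR : ℝ := ∏ i, mu i with hsRdef
  have hsR : S.det = (sR : ℂ) := by
    rw [hSps.1.det_eq_prod_eigenvalues, hsRdef]
    push_cast
    rfl
  have hsRnn : 0 ≤ sR := Finset.prod_nonneg fun i _ => hSps.eigenvalues_nonneg i
  have hsRne : sR ≠ 0 := by
    intro h0
    exact hdetS_ne (by rw [hsR, h0, Complex.ofReal_zero])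
  set p : ℝ := ∏ i, lam i with hpdef
  have hppos : 0 < p := Finset.prod_pos fun i _ => hlampos i
  -- compute the three determinants
  have hdetA' : A.det = ((sR * sR : ℝ) : ℂ) := by
    rw [← hSS, Matrix.det_mul, hsR]; push_cast; ring
  have hdetB' : B.det = ((sR * p * sR : ℝ) : ℂ) := by
    rw [← hBC, Matrix.det_mul, Matrix.det_mul, hsR, hdetC, hpdef]
    push_cast
    ring
  have hdetM' : (((1 : ℂ) / 2) • (A + B)).det
      = ((sR * (((1 : ℝ) / 2) ^ n * ∏ i, (1 + lam i)) * sR : ℝ) : ℂ) := by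
    have hsm : ((1 : ℂ) / 2) • (S * (1 + C) * S) = S * (((1 : ℂ) / 2) • (1 + C)) * S := by
      rw [Matrix.mul_smul, Matrix.smul_mul]
    rw [hABd, hsm, Matrix.det_mul, Matrix.det_mul, Matrix.det_smul, hdet1C, hsR]
    push_cast
    simp only [Fintype.card_fin]
  -- convert the hypothesis to a real equation
  rw [hdetA', hdetB', hdetM', Complex.ofReal_re, Complex.ofReal_re, Complex.ofReal_re] at h
  rw [← Real.sqrt_eq_rpow, ← Real.sqrt_eq_rpow] at h
  have hsq1 : Real.sqrt (sR * sR) = sR := Real.sqrt_mul_self hsRnn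
  have hsq2 : Real.sqrt (sR * p * sR) = sR * Real.sqrt p := by
    have h1 : sR * p * sR = sR * sR * p := by ring
    rw [h1, Real.sqrt_mul (mul_self_nonneg sR), hsq1]
  rw [hsq1, hsq2] at h
  have h' : (sR * sR) * (((1 : ℝ) / 2) ^ n * ∏ i, (1 + lam i))
      = (sR * sR) * Real.sqrt p := by linear_combination h
  have hk : ((1 : ℝ) / 2) ^ n * ∏ i, (1 + lam i) = Real.sqrt p :=
    mul_left_cancel₀ (mul_ne_zero hsRne hsRne) h'
  have hsp : Real.sqrt p = ∏ i, Real.sqrt (lam i) := by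
    simp only [Real.sqrt_eq_rpow]
    exact (Real.finset_prod_rpow _ _ (fun i _ => (hlampos i).le) _).symm
  have hL : ((1 : ℝ) / 2) ^ n * ∏ i, (1 + lam i) = ∏ i, ((1 + lam i) / 2) := by
    rw [Finset.prod_div_distrib, Finset.prod_const, Finset.card_univ, Fintype.card_fin]
    rw [_root_.one_div_pow]
    ring
  have heqq : ∏ i, ((1 + lam i) / 2) = ∏ i, Real.sqrt (lam i) := by
    rw [← hL, hk, hsp]
  have hlam1 : ∀ i, lam i = 1 := by
    by_contra hcon
    push_neg at hcon
    obtain ⟨j, hj⟩ := hcon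
    have hlt : (∏ i, Real.sqrt (lam i)) < ∏ i, ((1 + lam i) / 2) :=
      Finset.prod_lt_prod (fun i _ => Real.sqrt_pos.mpr (hlampos i))
        (fun i _ => aux_sqrt_le (hlampos i))
        ⟨j, Finset.mem_univ j, aux_sqrt_lt (hlampos j) hj⟩
    rw [heqq] at hlt
    exact lt_irrefl _ hlt
  have hdiag : Matrix.diagonal (RCLike.ofReal ∘ lam) = (1 : Matrix (Fin n) (Fin n) ℂ) := by
    have hfun : (RCLike.ofReal ∘ lam : Fin n → ℂ) = fun _ => (1 : ℂ) := by
      funext i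
      simp [Function.comp, hlam1 i]
    rw [hfun, Matrix.diagonal_one]
  have hC1 : C = 1 := by rw [hspec, hdiag, mul_one, hUU]
  have hBA : B = A := by rw [← hBC, hC1, mul_one, hSS]
  exact hBA.symm

/-- Equality in the log-concavity of the determinant for the capacity functional forces
`HQ⁽¹⁾Hᴴ = HQ⁽²⁾Hᴴ` (deterministic core of Lemma 2.2). -/
theorem stmt9 (M N : ℕ) (H : Matrix (Fin M) (Fin N) ℂ)
    (Q1 Q2 : Matrix (Fin N) (Fin N) ℂ) (hQ1 : Q1.PosSemidef) (hQ2 : Q2.PosSemidef)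
    (σ2 : ℝ) (hσ : 0 < σ2)
    (heq : ((1 : Matrix (Fin M) (Fin M) ℂ) +
        ((σ2 : ℂ))⁻¹ • (H * (((1 : ℂ) / 2) • (Q1 + Q2)) * Hᴴ)).det.re
      = ((1 : Matrix (Fin M) (Fin M) ℂ) + ((σ2 : ℂ))⁻¹ • (H * Q1 * Hᴴ)).det.re ^ ((1 : ℝ) / 2)
        * ((1 : Matrix (Fin M) (Fin M) ℂ) + ((σ2 : ℂ))⁻¹ • (H * Q2 * Hᴴ)).det.re ^ ((1 : ℝ) / 2)) :
    H * Q1 * Hᴴ = H * Q2 * Hᴴ := by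
  have hc : ((σ2 : ℂ))⁻¹ = ((σ2⁻¹ : ℝ) : ℂ) := by push_cast; rfl
  have hX1 : (((σ2 : ℂ))⁻¹ • (H * Q1 * Hᴴ)).PosSemidef := by
    rw [hc]
    exact aux_smul_posSemidef (hQ1.mul_mul_conjTranspose_same H) (inv_nonneg.mpr hσ.le)
  have hX2 : (((σ2 : ℂ))⁻¹ • (H * Q2 * Hᴴ)).PosSemidef := by
    rw [hc]
    exact aux_smul_posSemidef (hQ2.mul_mul_conjTranspose_same H) (inv_nonneg.mpr hσ.le)
  have hA1 : ((1 : Matrix (Fin M) (Fin M) ℂ) + ((σ2 : ℂ))⁻¹ • (H * Q1 * Hᴴ)).PosDef :=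
    Matrix.PosDef.add_posSemidef Matrix.PosDef.one hX1
  have hA2 : ((1 : Matrix (Fin M) (Fin M) ℂ) + ((σ2 : ℂ))⁻¹ • (H * Q2 * Hᴴ)).PosDef :=
    Matrix.PosDef.add_posSemidef Matrix.PosDef.one hX2
  have hmid : (1 : Matrix (Fin M) (Fin M) ℂ) +
      ((σ2 : ℂ))⁻¹ • (H * (((1 : ℂ) / 2) • (Q1 + Q2)) * Hᴴ)
      = ((1 : ℂ) / 2) • (((1 : Matrix (Fin M) (Fin M) ℂ) + ((σ2 : ℂ))⁻¹ • (H * Q1 * Hᴴ))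
        + ((1 : Matrix (Fin M) (Fin M) ℂ) + ((σ2 : ℂ))⁻¹ • (H * Q2 * Hᴴ))) := by
    have hmm : H * (((1 : ℂ) / 2) • (Q1 + Q2)) * Hᴴ
        = ((1 : ℂ) / 2) • (H * Q1 * Hᴴ + H * Q2 * Hᴴ) := by
      rw [Matrix.mul_smul, Matrix.smul_mul, Matrix.mul_add, Matrix.add_mul]
    rw [hmm]
    module
  rw [hmid] at heq
  have hkey := aux_key hA1 hA2 heq
  have h2 : ((σ2 : ℂ))⁻¹ • (H * Q1 * Hᴴ) = ((σ2 : ℂ))⁻¹ • (H * Q2 * Hᴴ) :=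
    add_left_cancel hkey
  exact smul_right_injective _ (inv_ne_zero (Complex.ofReal_ne_zero.mpr hσ.ne')) h2
end
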